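/- The functions x₁(t) = e^{-t}cos t and x₂(t) = sin t are solutions of ẍ(t) + ((2sin²t + cos t sin t)/(1 + cos t sin t))ẋ(t) + ((sin²t - cos t sin t)/(1 + cos t sin t))x(t) = 0, and ∫₀^π (2sin²t + cos t sin t)/(1 + cos t sin t) dt > 0, yet the equation is not exponentially stable since the solution x₂(t) = sin t does not tend to zero. -/

import Mathlib

open Real Filter

private lemma denom_pos (t : ℝ) : 0 < 1 + Real.cos t * Real.sin t := by
  nlinarith [sq_nonneg (Real.sin t + Real.cos t), Real.sin_sq_add_cos_sq t]

private lemma hx1d (t : ℝ) :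
    HasDerivAt (fun t => Real.exp (-t) * Real.cos t)
      (-(Real.exp (-t)) * Real.cos t + Real.exp (-t) * (-Real.sin t)) t := by
  have h1 : HasDerivAt (fun t : ℝ => Real.exp (-t)) (-(Real.exp (-t))) t := by
    exact ((Real.hasDerivAt_exp (-t)).comp t ((hasDerivAt_id t).neg)).congr_deriv (by simp)
  exact h1.mul (Real.hasDerivAt_cos t)

private lemma hx1dd (t : ℝ) :
    HasDerivAt (fun t => -(Real.exp (-t)) * Real.cos t + Real.exp (-t) * (-Real.sin t))
      (2 * Real.exp (-t) * Real.sin t) t := by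
  have h1 : HasDerivAt (fun t : ℝ => Real.exp (-t)) (-(Real.exp (-t))) t := by
    exact ((Real.hasDerivAt_exp (-t)).comp t ((hasDerivAt_id t).neg)).congr_deriv (by simp)
  have h2 := (h1.neg.mul (Real.hasDerivAt_cos t)).add (h1.mul (Real.hasDerivAt_sin t).neg)
  exact h2.congr_deriv (by simp only [Pi.neg_apply]; ring)

theorem stmt17 (a b x₁ x₂ : ℝ → ℝ)
    (ha : ∀ t, a t = (2 * Real.sin t ^ 2 + Real.cos t * Real.sin t)
        / (1 + Real.cos t * Real.sin t))
    (hb : ∀ t, b t = (Real.sin t ^ 2 - Real.cos t * Real.sin t)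
        / (1 + Real.cos t * Real.sin t))
    (hx₁ : ∀ t, x₁ t = Real.exp (-t) * Real.cos t)
    (hx₂ : ∀ t, x₂ t = Real.sin t) :
    (∀ t, deriv (deriv x₁) t + a t * deriv x₁ t + b t * x₁ t = 0) ∧
    (∀ t, deriv (deriv x₂) t + a t * deriv x₂ t + b t * x₂ t = 0) ∧
    (0 < ∫ t in (0:ℝ)..Real.pi, a t) ∧
    ¬ Tendsto x₂ atTop (nhds 0) := by
  have hx₁' : x₁ = fun t => Real.exp (-t) * Real.cos t := funext hx₁
  have hx₂' : x₂ = fun t => Real.sin t := funext hx₂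
  have hd1 : deriv x₁ = fun t => -(Real.exp (-t)) * Real.cos t + Real.exp (-t) * (-Real.sin t) := by
    funext t; rw [hx₁']; exact (hx1d t).deriv
  have hd2 : deriv x₂ = Real.cos := by
    funext t; rw [hx₂']; exact (Real.hasDerivAt_sin t).deriv
  refine ⟨?_, ?_, ?_, ?_⟩
  · intro t
    rw [hd1, hx₁ t, ha t, hb t, (hx1dd t).deriv]
    have hne := (denom_pos t).ne'
    have hne' : 1 + Real.sin t * Real.cos t ≠ 0 := by rw [mul_comm]; exact hne
    field_simp
    linear_combination (-2 * Real.exp (-t) * Real.sin t) * Real.sin_sq_add_cos_sq t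
  · intro t
    rw [hd2, hx₂ t, ha t, hb t]
    have : deriv Real.cos t = -Real.sin t := (Real.hasDerivAt_cos t).deriv
    rw [this]
    have hne := (denom_pos t).ne'
    have hne' : 1 + Real.sin t * Real.cos t ≠ 0 := by rw [mul_comm]; exact hne
    field_simp
    linear_combination Real.sin t * Real.sin_sq_add_cos_sq t
  · have hcont : Continuous a := by
      have : a = fun t => (2 * Real.sin t ^ 2 + Real.cos t * Real.sin t)
          / (1 + Real.cos t * Real.sin t) := funext ha
      rw [this]
      exact Continuous.div (by continuity) (by continuity) (fun t => (denom_pos t).ne')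
    have key : ∀ t ∈ Set.uIcc (0:ℝ) Real.pi,
        HasDerivAt (fun t => t - Real.log (1 + Real.cos t * Real.sin t)) (a t) t := by
      intro t _
      have hin : HasDerivAt (fun t => 1 + Real.cos t * Real.sin t)
          (-Real.sin t * Real.sin t + Real.cos t * Real.cos t) t := by
        exact ((hasDerivAt_const t (1:ℝ)).add
          ((Real.hasDerivAt_cos t).mul (Real.hasDerivAt_sin t))).congr_deriv (by simp)
      have hlog := (Real.hasDerivAt_log (denom_pos t).ne').comp t hin
      have h := (hasDerivAt_id t).sub hlog
      refine h.congr_deriv ?_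
      rw [ha t]
      have hne := (denom_pos t).ne'
      field_simp
      ring_nf
      nlinarith [Real.sin_sq_add_cos_sq t]
    have := intervalIntegral.integral_eq_sub_of_hasDerivAt key
      (hcont.intervalIntegrable 0 Real.pi)
    rw [this]
    simp [Real.sin_pi, Real.cos_pi]
    exact Real.pi_pos
  · rw [hx₂']
    intro h
    have ht : Tendsto (fun n : ℕ => Real.pi/2 + n * (2 * Real.pi)) atTop atTop := by
      apply tendsto_atTop_add_const_left
      exact Tendsto.atTop_mul_const (by positivity) tendsto_natCast_atTop_atTop
    have h2 := h.comp ht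
    have h3 : (fun n : ℕ => Real.sin (Real.pi/2 + n * (2 * Real.pi))) = fun _ => (1:ℝ) := by
      funext n
      rw [Real.sin_add_nat_mul_two_pi, Real.sin_pi_div_two]
    rw [Function.comp_def, h3] at h2
    have := tendsto_nhds_unique h2 tendsto_const_nhds
    norm_num at this
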